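/- Let S be a lower subset of ℕ₀^d with |S| ≤ k and u_i = 2^{‖i‖₀/2} (Chebyshev weights). Then |S|_u = ∑_{i ∈ S} 2^{‖i‖₀} ≤ k^{log 3 / log 2}. -/

import Mathlib

def IsLowerMultiSet {d : ℕ} (S : Set (Fin d → ℕ)) : Prop :=
  ∀ i ∈ S, ∀ i' : Fin d → ℕ, (∀ j, i' j ≤ i j) → i' ∈ S

local notation "γ" => Real.log 3 / Real.log 2

lemma gamma_gt_one : 1 < γ :=
  (one_lt_div (Real.log_pos (by norm_num))).2 (Real.log_lt_log (by norm_num) (by norm_num))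

lemma gamma_lt_two : γ < 2 := by
  rw [div_lt_iff₀ (Real.log_pos (by norm_num))]
  calc Real.log 3 < Real.log 4 := Real.log_lt_log (by norm_num) (by norm_num)
    _ = 2 * Real.log 2 := by
      rw [show (4:ℝ) = 2^(2:ℕ) by norm_num, Real.log_pow]; push_cast; ring

lemma two_rpow_gamma : (2:ℝ) ^ γ = 3 := by
  rw [Real.rpow_def_of_pos (by norm_num), mul_div_assoc', mul_comm,
    mul_div_assoc, div_self (Real.log_pos (by norm_num : (1:ℝ) < 2)).ne', mul_one,
    Real.exp_log (by norm_num)]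

/-- key pointwise inequality on `[0,1]` -/
lemma key_ineq {t : ℝ} (ht0 : 0 ≤ t) (ht1 : t ≤ 1) :
    1 + 2 * t ^ γ ≤ (1 + t) ^ γ := by
  have hγ1 := gamma_gt_one
  have hγ2 := gamma_lt_two
  have hγsub : 0 < γ - 1 := by linarith
  set c : ℝ := (2:ℝ) ^ ((γ - 1)⁻¹) with hc
  have hc2 : 2 < c := by
    have : (2:ℝ)^(1:ℝ) < 2 ^ ((γ-1)⁻¹) :=
      Real.rpow_lt_rpow_of_exponent_lt (by norm_num)
        ((one_lt_inv₀ hγsub).2 (by linarith))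
    simpa [Real.rpow_one] using this
  have hcpow : c ^ (γ - 1) = 2 := by
    rw [hc, ← Real.rpow_mul (by norm_num), inv_mul_cancel₀ hγsub.ne', Real.rpow_one]
  set t₀ : ℝ := 1/(c-1) with ht₀
  have hc1 : 0 < c - 1 := by linarith
  have ht₀pos : 0 < t₀ := by positivity
  have ht₀lt1 : t₀ < 1 := by rw [ht₀, div_lt_one hc1]; linarith
  set f : ℝ → ℝ := fun t => (1+t)^γ - 2*t^γ with hfdef
  have hcont : Continuous f := by
    apply Continuous.sub
    · exact (Real.continuous_rpow_const (by linarith)).comp (continuous_const.add continuous_id)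
    · exact continuous_const.mul (Real.continuous_rpow_const (by linarith))
  have hderiv : ∀ x : ℝ, 0 < x → HasDerivAt f (γ*(1+x)^(γ-1)*1 - 2*(γ*x^(γ-1))) x := by
    intro x hx
    have h1 : HasDerivAt (fun t:ℝ => 1+t) 1 x := (hasDerivAt_id x).const_add 1
    have h2 : HasDerivAt (fun t:ℝ => (1+t)^γ) (γ*(1+x)^(γ-1)*1) x :=
      (Real.hasDerivAt_rpow_const (p := γ) (Or.inl (by positivity))).comp x h1
    have h3 : HasDerivAt (fun t:ℝ => 2*t^γ) (2*(γ*x^(γ-1))) x :=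
      (Real.hasDerivAt_rpow_const (p := γ) (Or.inl hx.ne')).const_mul 2
    exact h2.sub h3
  have hrw2 : ∀ x : ℝ, 0 ≤ x → (2:ℝ) * x^(γ-1) = (c*x)^(γ-1) := by
    intro x hx
    rw [Real.mul_rpow (by linarith) hx, hcpow]
  have hsign_pos : ∀ x ∈ Set.Ioo (0:ℝ) t₀, 0 < deriv f x := by
    rintro x ⟨hx0, hxt⟩
    rw [(hderiv x hx0).deriv]
    have hlt : c * x < 1 + x := by
      have h1 : (c-1)*x < (c-1)*t₀ := mul_lt_mul_of_pos_left hxt hc1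
      have h2 : (c-1)*t₀ = 1 := by rw [ht₀]; field_simp
      nlinarith
    have hr := Real.rpow_lt_rpow (by positivity) hlt hγsub
    rw [← hrw2 x hx0.le] at hr
    nlinarith
  have hsign_neg : ∀ x ∈ Set.Ioo t₀ (1:ℝ), deriv f x < 0 := by
    rintro x ⟨hxt, hx1⟩
    have hx0 : 0 < x := ht₀pos.trans hxt
    rw [(hderiv x hx0).deriv]
    have hlt : 1 + x < c * x := by
      have h1 : (c-1)*t₀ < (c-1)*x := mul_lt_mul_of_pos_left hxt hc1
      have h2 : (c-1)*t₀ = 1 := by rw [ht₀]; field_simp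
      nlinarith
    have hr := Real.rpow_lt_rpow (by positivity) hlt hγsub
    rw [← hrw2 x hx0.le] at hr
    nlinarith
  have hmono : StrictMonoOn f (Set.Icc 0 t₀) :=
    strictMonoOn_of_deriv_pos (convex_Icc _ _) hcont.continuousOn
      (by rw [interior_Icc]; exact hsign_pos)
  have hanti : StrictAntiOn f (Set.Icc t₀ 1) :=
    strictAntiOn_of_deriv_neg (convex_Icc _ _) hcont.continuousOn
      (by rw [interior_Icc]; exact hsign_neg)
  have hf0 : f 0 = 1 := by
    simp [hfdef, Real.zero_rpow (by positivity : (0:ℝ) < γ).ne']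
  have hf1 : f 1 = 1 := by
    simp only [hfdef]
    rw [Real.one_rpow, show (1:ℝ)+1 = 2 by norm_num, two_rpow_gamma]; norm_num
  have hgoal : 1 ≤ f t := by
    rcases le_total t t₀ with h | h
    · rcases eq_or_lt_of_le ht0 with h0 | h0
      · rw [← h0, hf0]
      · have := hmono (Set.mem_Icc.2 ⟨le_refl 0, ht₀pos.le⟩) (Set.mem_Icc.2 ⟨ht0, h⟩) h0
        rw [hf0] at this; linarith
    · rcases eq_or_lt_of_le ht1 with h1 | h1
      · rw [h1, hf1]
      · have := hanti (Set.mem_Icc.2 ⟨h, ht1⟩) (Set.mem_Icc.2 ⟨ht₀lt1.le, le_refl 1⟩) h1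
        rw [hf1] at this; linarith
  simp only [hfdef] at hgoal; linarith

lemma gamma_ne_zero : γ ≠ 0 := by have := gamma_gt_one; linarith

lemma two_var {x y : ℝ} (hy : 0 ≤ y) (hxy : y ≤ x) :
    x ^ γ + 2 * y ^ γ ≤ (x + y) ^ γ := by
  rcases eq_or_lt_of_le (hy.trans hxy) with hx0 | hx0
  · have hy0 : y = 0 := le_antisymm (hxy.trans hx0.symm.le) hy
    subst hy0; rw [← hx0]
    simp [Real.zero_rpow gamma_ne_zero]
  · set t := y / x with htdef
    have ht0 : 0 ≤ t := div_nonneg hy hx0.le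
    have ht1 : t ≤ 1 := (div_le_one hx0).2 hxy
    have hk := key_ineq ht0 ht1
    have hxpow : 0 < x ^ γ := Real.rpow_pos_of_pos hx0 _
    have h1 : x + y = x * (1 + t) := by rw [htdef]; field_simp
    have h2 : y = x * t := by rw [htdef]; field_simp
    rw [h1, h2, Real.mul_rpow hx0.le ht0,
      Real.mul_rpow hx0.le (by linarith : (0:ℝ) ≤ 1 + t)]
    nlinarith

lemma sum_pow (n : ℕ → ℕ) (hn : ∀ j, n j ≤ n 0) (M : ℕ) (hM : 1 ≤ M) :
    ((n 0 : ℝ)) ^ γ + 2 * ∑ j ∈ Finset.Ico 1 M, ((n j : ℝ)) ^ γ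
      ≤ (∑ j ∈ Finset.range M, (n j : ℝ)) ^ γ := by
  induction M, hM using Nat.le_induction with
  | base => simp
  | succ M hM ih =>
    rw [Finset.sum_Ico_succ_top hM, Finset.sum_range_succ]
    have hA : (n 0 : ℝ) ≤ ∑ j ∈ Finset.range M, (n j : ℝ) :=
      Finset.single_le_sum (f := fun j => (n j : ℝ)) (fun j _ => by positivity)
        (Finset.mem_range.2 hM)
    have hnM : (n M : ℝ) ≤ (n 0 : ℝ) := by exact_mod_cast hn M
    have h2 := two_var (x := ∑ j ∈ Finset.range M, (n j : ℝ)) (y := (n M : ℝ))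
      (by positivity) (hnM.trans hA)
    linarith

lemma weight_split {d : ℕ} (i : Fin (d+1) → ℕ) :
    (Finset.univ.filter fun l => i l ≠ 0).card
      = (if i 0 ≠ 0 then 1 else 0) + (Finset.univ.filter fun l => Fin.tail i l ≠ 0).card := by
  rw [Finset.card_filter, Finset.card_filter, Fin.sum_univ_succ]
  simp [Fin.tail]
  exact Finset.sum_congr rfl fun x _ => by split_ifs <;> simp_all

lemma main_lemma : ∀ d : ℕ, ∀ S : Finset (Fin d → ℕ),
    IsLowerMultiSet (↑S : Set (Fin d → ℕ)) →
    (∑ i ∈ S, (2:ℝ) ^ (Finset.univ.filter fun j => i j ≠ 0).card)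
      ≤ (S.card : ℝ) ^ γ := by
  intro d
  induction d with
  | zero =>
    intro S _
    rcases Finset.eq_empty_or_nonempty S with rfl | ⟨i, hi⟩
    · simp [Real.zero_rpow gamma_ne_zero]
    · have hS : S = {i} :=
        Finset.eq_singleton_iff_unique_mem.2 ⟨hi, fun j _ => Subsingleton.elim j i⟩
      subst hS
      simp [Finset.univ_eq_empty]
  | succ d ih =>
    intro S hlow
    classical
    set M : ℕ := (S.sup fun i => i 0) + 1 with hM
    have hmaps : ∀ i ∈ S, i 0 ∈ Finset.range M := by
      intro i hi
      exact Finset.mem_range.2 (Nat.lt_succ_of_le (Finset.le_sup (f := fun i => i 0) hi))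
    set Sl : ℕ → Finset (Fin d → ℕ) :=
      fun j => (S.filter fun i => i 0 = j).image (fun i : Fin (d+1) → ℕ => Fin.tail i) with hSl
    -- injectivity of tail on each fiber
    have hinj : ∀ j : ℕ, Set.InjOn (fun i : Fin (d+1) → ℕ => Fin.tail i) ↑(S.filter fun i => i 0 = j) := by
      intro j i1 h1 i2 h2 heq
      have e1 : i1 0 = j := (Finset.mem_filter.1 h1).2
      have e2 : i2 0 = j := (Finset.mem_filter.1 h2).2
      funext l
      refine Fin.cases ?_ ?_ l
      · rw [e1, e2]
      · intro m; exact congrFun heq m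
    have hcardSl : ∀ j, (Sl j).card = (S.filter fun i => i 0 = j).card := by
      intro j; exact Finset.card_image_of_injOn (hinj j)
    -- each slice is lower
    have hlowSl : ∀ j, IsLowerMultiSet (↑(Sl j) : Set (Fin d → ℕ)) := by
      intro j i' hi' m hm
      simp only [hSl, Finset.coe_image, Set.mem_image, Finset.mem_coe,
        Finset.mem_filter] at hi' ⊢
      obtain ⟨i, ⟨hiS, hi0⟩, htail⟩ := hi'
      refine ⟨Fin.cons j m, ⟨?_, ?_⟩, ?_⟩
      · apply hlow i hiS
        intro l
        refine Fin.cases ?_ ?_ l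
        · rw [Fin.cons_zero, hi0]
        · intro l'; rw [Fin.cons_succ]
          exact (hm l').trans (by rw [← htail]; rfl)
      · simp
      · simp [Fin.tail_cons]
    -- slices are contained in slice 0
    have hsub : ∀ j, Sl j ⊆ Sl 0 := by
      intro j i' hi'
      simp only [hSl, Finset.mem_image, Finset.mem_filter] at hi' ⊢
      obtain ⟨i, ⟨hiS, hi0⟩, htail⟩ := hi'
      refine ⟨Fin.cons 0 i', ⟨?_, ?_⟩, ?_⟩
      · apply hlow i hiS
        intro l
        refine Fin.cases ?_ ?_ l
        · simp
        · intro l'; rw [Fin.cons_succ, ← htail]; rfl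
      · simp
      · simp [Fin.tail_cons]
    set n : ℕ → ℕ := fun j => (Sl j).card with hn
    have hnle : ∀ j, n j ≤ n 0 := fun j => Finset.card_le_card (hsub j)
    -- decompose the sum
    have hsplit : (∑ i ∈ S, (2:ℝ) ^ (Finset.univ.filter fun l => i l ≠ 0).card)
        = ∑ j ∈ Finset.range M, (if j = 0 then 1 else 2) *
            ∑ i' ∈ Sl j, (2:ℝ) ^ (Finset.univ.filter fun l => i' l ≠ 0).card := by
      rw [← Finset.sum_fiberwise_of_maps_to hmaps]
      refine Finset.sum_congr rfl fun j _ => ?_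
      rw [hSl, Finset.sum_image (fun i1 h1 i2 h2 => hinj j h1 h2), Finset.mul_sum]
      refine Finset.sum_congr rfl fun i hi => ?_
      have hi0 : i 0 = j := (Finset.mem_filter.1 hi).2
      rw [weight_split i, hi0]
      split_ifs with h1 h2 h2 <;> simp_all [pow_add]
    -- card decomposition
    have hcards : S.card = ∑ j ∈ Finset.range M, n j := by
      rw [Finset.card_eq_sum_card_fiberwise hmaps]
      exact Finset.sum_congr rfl fun j _ => (hcardSl j).symm
    have hM1 : 1 ≤ M := by rw [hM]; exact Nat.le_add_left 1 _
    have hTle : ∀ j, (∑ i' ∈ Sl j, (2:ℝ) ^ (Finset.univ.filter fun l => i' l ≠ 0).card)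
        ≤ (n j : ℝ) ^ γ := fun j => ih (Sl j) (hlowSl j)
    have hTnn : ∀ j, (0:ℝ) ≤ ∑ i' ∈ Sl j, (2:ℝ) ^ (Finset.univ.filter fun l => i' l ≠ 0).card :=
      fun j => Finset.sum_nonneg fun _ _ => by positivity
    rw [hsplit, Finset.range_eq_Ico, Finset.sum_eq_sum_Ico_succ_bot hM1]
    rw [if_pos rfl, one_mul]
    have step1 : ∑ j ∈ Finset.Ico 1 M, (if j = 0 then (1:ℝ) else 2) *
          ∑ i' ∈ Sl j, (2:ℝ) ^ (Finset.univ.filter fun l => i' l ≠ 0).card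
        ≤ ∑ j ∈ Finset.Ico 1 M, 2 * (n j : ℝ) ^ γ := by
      refine Finset.sum_le_sum fun j hj => ?_
      have hj0 : j ≠ 0 := Nat.one_le_iff_ne_zero.1 (Finset.mem_Ico.1 hj).1
      rw [if_neg hj0]
      nlinarith [hTle j, hTnn j]
    have step2 := sum_pow n hnle M hM1
    have hfin : ((∑ j ∈ Finset.range M, (n j : ℝ))) = (S.card : ℝ) := by
      rw [hcards]; push_cast; rfl
    rw [Finset.mul_sum] at step2
    calc _ ≤ (n 0 : ℝ) ^ γ + ∑ j ∈ Finset.Ico 1 M, 2 * (n j : ℝ) ^ γ := by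
            have := hTle 0; linarith [step1]
      _ ≤ (∑ j ∈ Finset.range M, (n j : ℝ)) ^ γ := by
            rw [Finset.range_eq_Ico] at step2 ⊢; exact step2
      _ = (S.card : ℝ) ^ γ := by rw [hfin]

/-- For a lower set `S ⊆ ℕ₀^d` with `|S| ≤ k` and Chebyshev weights
`u_i = 2^{‖i‖₀/2}`, the weighted cardinality satisfies
`|S|_u = ∑_{i∈S} 2^{‖i‖₀} ≤ k^{log 3 / log 2}`. -/
theorem chebyshev_weighted_card_lower_set (d k : ℕ) (S : Finset (Fin d → ℕ))
    (hlower : IsLowerMultiSet (↑S : Set (Fin d → ℕ))) (hcard : S.card ≤ k) :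
    (∑ i ∈ S, (2 : ℝ) ^ (Finset.univ.filter fun j => i j ≠ 0).card)
      ≤ (k : ℝ) ^ (Real.log 3 / Real.log 2) := by
  calc (∑ i ∈ S, (2 : ℝ) ^ (Finset.univ.filter fun j => i j ≠ 0).card)
      ≤ (S.card : ℝ) ^ γ := main_lemma d S hlower
    _ ≤ (k : ℝ) ^ γ :=
        Real.rpow_le_rpow (Nat.cast_nonneg _) (Nat.cast_le.2 hcard)
          (by linarith [gamma_gt_one])
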